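/- For tree terms u and t, u is a subterm of t if and only if the code u^τ is a contiguous substring of the code t^τ. -/

import Mathlib

inductive Letter : Type
  | a | b
deriving DecidableEq

open Letter

def alpha (x : List Letter) : ℕ := x.count Letter.a
def beta (x : List Letter) : ℕ := x.count Letter.b

def AE (x : List Letter) : Prop :=
  x ≠ [] ∧ alpha x = beta x + 1 ∧ ∀ u : List Letter, u <+: x → u ≠ x → alpha u ≤ beta u

inductive Tr : Type
  | zero | pair (u v : Tr)
deriving DecidableEq

def code : Tr → List Letter
  | Tr.zero => [Letter.a]
  | Tr.pair u v => Letter.b :: (code u ++ code v)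

inductive Subt : Tr → Tr → Prop
  | refl (t : Tr) : Subt t t
  | left {s u v : Tr} : Subt s u → Subt s (Tr.pair u v)
  | right {s u v : Tr} : Subt s v → Subt s (Tr.pair u v)

lemma alpha_append (x y : List Letter) : alpha (x ++ y) = alpha x + alpha y := List.count_append
lemma beta_append (x y : List Letter) : beta (x ++ y) = beta x + beta y := List.count_append
lemma alpha_cons_b (x : List Letter) : alpha (Letter.b :: x) = alpha x := by simp [alpha]
lemma beta_cons_b (x : List Letter) : beta (Letter.b :: x) = beta x + 1 := by simp [beta]

lemma code_ne_nil (t : Tr) : code t ≠ [] := by cases t <;> simp [code]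

lemma alpha_code (t : Tr) : alpha (code t) = beta (code t) + 1 := by
  induction t with
  | zero => simp [code, alpha, beta]
  | pair u v ihu ihv =>
    simp only [code, alpha_cons_b, beta_cons_b, alpha_append, beta_append]
    omega

lemma prefix_alpha (t : Tr) : ∀ p, p <+: code t → p ≠ code t → alpha p ≤ beta p := by
  induction t with
  | zero =>
    intro p hp hne
    rcases hp with ⟨r, hr⟩
    cases p with
    | nil => simp [alpha, beta]
    | cons x q =>
      cases q with
      | nil => simp_all [code]
      | cons y q' => simp [code] at hr
  | pair u v ihu ihv =>
    intro p hp hne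
    cases p with
    | nil => simp [alpha, beta]
    | cons x q =>
      rcases hp with ⟨r, hr⟩
      simp only [code, List.cons_append] at hr
      injection hr with h1 h2
      subst h1
      have hq : q <+: code u ++ code v := ⟨r, h2⟩
      have hqne : q ≠ code u ++ code v := by
        intro h; apply hne; simp [code, h]
      rw [alpha_cons_b, beta_cons_b]
      rcases le_or_gt q.length (code u).length with hl | hl
      · have hqu : q <+: code u :=
          List.prefix_of_prefix_length_le hq (List.prefix_append _ _) (by simpa using hl)
        rcases eq_or_ne q (code u) with h | h
        · rw [h, alpha_code u]
        · have := ihu q hqu h; omega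
      · have hqu : code u <+: q :=
          List.prefix_of_prefix_length_le (List.prefix_append _ _) hq (le_of_lt hl)
        rcases hqu with ⟨q', hq'⟩
        subst hq'
        have hq2 : q' <+: code v := by
          rcases hq with ⟨r', hr'⟩
          exact ⟨r', by rw [List.append_assoc] at hr'; exact List.append_cancel_left hr'⟩
        have hq2ne : q' ≠ code v := fun h => hqne (by rw [h])
        have := ihv q' hq2 hq2ne
        rw [alpha_append, beta_append, alpha_code u]
        omega

lemma suffix_alpha (t : Tr) (s p : List Letter) (h : code t = s ++ p) (hp : p ≠ []) :
    beta p + 1 ≤ alpha p := by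
  have hs : s <+: code t := ⟨p, h.symm⟩
  have hsne : s ≠ code t := by
    intro he; rw [he] at h
    have := congrArg List.length h
    simp at this
    exact hp this
  have h1 := prefix_alpha t s hs hsne
  have h2 := alpha_code t
  rw [h, alpha_append, beta_append] at h2
  omega

lemma code_prefix_eq {u v : Tr} (h : code u <+: code v) : code u = code v := by
  by_contra hne
  have h1 := prefix_alpha v _ h hne
  have h2 := alpha_code u
  omega

lemma code_inj : ∀ s t : Tr, code s = code t → s = t := by
  intro s
  induction s with
  | zero => intro t h; cases t with
    | zero => rfl
    | pair a b => simp [code] at h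
  | pair s1 s2 ih1 ih2 =>
    intro t h
    cases t with
    | zero => simp [code] at h
    | pair t1 t2 =>
      simp only [code, List.cons.injEq] at h
      obtain ⟨-, h⟩ := h
      have hst : code s1 = code t1 := by
        rcases le_or_gt (code s1).length (code t1).length with hl | hl
        · exact code_prefix_eq (List.prefix_of_prefix_length_le ⟨code s2, h⟩ (List.prefix_append _ _) hl)
        · exact (code_prefix_eq (List.prefix_of_prefix_length_le (List.prefix_append _ _) ⟨code s2, h⟩ hl.le)).symm
      rw [hst] at h
      have := List.append_cancel_left h
      rw [ih1 t1 hst, ih2 t2 this]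

lemma infix_subt : ∀ t u : Tr, code u <:+: code t → Subt u t := by
  intro t
  induction t with
  | zero =>
    intro u hinf
    have h1 : (code u).length ≤ 1 := by simpa [code] using hinf.length_le
    have h2 : 1 ≤ (code u).length := List.length_pos_iff.mpr (code_ne_nil u)
    have heq : code u = code Tr.zero :=
      hinf.sublist.eq_of_length (by simp [code]; omega)
    exact (code_inj u Tr.zero heq) ▸ Subt.refl _
  | pair v w ihv ihw =>
    intro u ⟨s, r, h⟩
    cases s with
    | nil =>
      simp only [List.nil_append] at h
      have : code u = code (Tr.pair v w) := code_prefix_eq ⟨r, by rw [h]⟩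
      exact (code_inj u _ this) ▸ Subt.refl _
    | cons x s' =>
      simp only [code, List.cons_append] at h
      injection h with h1 h2
      set m := (code v).length with hm
      set k := s'.length with hk
      set n := (code u).length with hn
      rcases le_or_gt (k + n) m with hle | hgt
      · -- inside code v
        have hpre : s' ++ code u <+: code v :=
          List.prefix_of_prefix_length_le ⟨r, h2⟩
            (List.prefix_append _ _) (by simp only [List.length_append]; omega)
        rcases hpre with ⟨r', hr'⟩
        exact Subt.left (ihv u ⟨s', r', hr'⟩)
      · rcases le_or_gt m k with hle2 | hgt2
        · -- inside code w
          have hpre : code v <+: s' :=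
            List.prefix_of_prefix_length_le (List.prefix_append _ _)
              ⟨code u ++ r, by rw [← List.append_assoc]; exact h2⟩ hle2
          rcases hpre with ⟨s'', hs''⟩
          subst hs''
          simp only [List.append_assoc] at h2
          have h3 := List.append_cancel_left h2
          exact Subt.right (ihw u ⟨s'', r, by simpa [List.append_assoc] using h3⟩)
        · -- straddle: contradiction
          exfalso
          set p := (code u).take (m - k) with hp
          have hplen : p.length = m - k := by
            rw [hp, List.length_take]; omega
          have hsplit : s' ++ p = code v := by
            have h5 := congrArg (List.take m) h2
            rw [List.take_left' hm.symm] at h5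
            rw [List.take_append, List.take_append] at h5
            rw [List.take_of_length_le (by omega : s'.length ≤ m)] at h5
            have hr0 : m - (s' ++ code u).length = 0 := by simp; omega
            rw [hr0] at h5
            simp only [List.take_zero, List.append_nil] at h5
            rw [← hk] at h5
            exact h5
          have hpne : p ≠ [] := by
            intro h0; rw [h0] at hplen; simp at hplen; omega
          have hple : p <+: code u := List.take_prefix _ _
          have hpne2 : p ≠ code u := by
            intro h0; rw [h0] at hplen; omega
          have h1' := prefix_alpha u p hple hpne2
          have h2' := suffix_alpha v s' p hsplit.symm hpne
          omega

theorem stmt13 (u t : Tr) : Subt u t ↔ code u <:+: code t := by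
  constructor
  · intro h
    induction h with
    | refl => exact List.infix_refl _
    | @left v w _ ih => exact ih.trans ⟨[Letter.b], code w, by simp [code]⟩
    | @right v w _ ih => exact ih.trans ⟨Letter.b :: code v, [], by simp [code]⟩
  · exact infix_subt t u
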